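/- Fix γ₀ > 0, let ω̄' : 𝕋 → ℝ be an odd bounded measurable function, R : 𝕋 → [0,∞) even bounded measurable, and p₊, p₋ : 𝕋 → [0,∞) even measurable functions with p₊(k) + p₋(k) ≤ 1 for all k. For W₀ : ℝ×𝕋 → ℝ measurable define (𝔚^un_t W₀)(y,k) = e^{−2γ₀R(k)t}[ W₀(y − ω̄'(k)t, k)·1{y ∉ I(k,t)} + p₊(k) W₀(y − ω̄'(k)t, k)·1{y ∈ I(k,t)} + p₋(k) W₀(−y + ω̄'(k)t, −k)·1{y ∈ I(k,t)} ], where I(k,t) is the closed interval with endpoints 0 and ω̄'(k)t. Then for every p ∈ [1,∞], each 𝔚^un_t is a bounded linear operator on L^p(ℝ×𝕋) with ‖𝔚^un_t W₀‖_{L^p} ≤ ‖W₀‖_{L^p} for all t ≥ 0, and the family is a semigroup: 𝔚^un_{t+s} W₀ = 𝔚^un_t (𝔚^un_s W₀) almost everywhere, for all s, t ≥ 0. -/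

import Mathlib

open MeasureTheory Set Filter
open scoped ENNReal

noncomputable section

open scoped Classical

/-- The unit torus `𝕋`, modeled as the interval `(-1/2, 1/2]` with Lebesgue measure
(total mass `1`). -/
def torusK : Set ℝ := Ioc (-(1:ℝ)/2) (1/2)

/-- The measure of `ℝ × 𝕋`: Lebesgue measure on `ℝ` times the (normalized) Lebesgue
measure on the torus. -/
def μYK : Measure (ℝ × ℝ) := (volume : Measure ℝ).prod (volume.restrict torusK)

/-- The damped-transport interface evolution
`(𝔚^un_t W₀)(y,k) = e^{−2γ₀R(k)t}[ W₀(y − ω̄'(k)t, k)·1{y ∉ I(k,t)}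
  + p₊(k) W₀(y − ω̄'(k)t, k)·1{y ∈ I(k,t)} + p₋(k) W₀(−y + ω̄'(k)t, −k)·1{y ∈ I(k,t)} ]`,
where `I(k,t)` is the closed interval with endpoints `0` and `ω̄'(k)t`. -/
def WunF (γ₀ : ℝ) (ωb R pp pm : ℝ → ℝ) (W₀ : ℝ → ℝ → ℝ) (t y k : ℝ) : ℝ :=
  Real.exp (-(2 * γ₀ * R k * t)) *
    (if y ∈ uIcc (0:ℝ) (ωb k * t) then
        pp k * W₀ (y - ωb k * t) k + pm k * W₀ (-y + ωb k * t) (-k)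
      else W₀ (y - ωb k * t) k)

/-! ### Auxiliary measure-theoretic lemmas -/

lemma map_neg_torus : (volume.restrict torusK).map Neg.neg = volume.restrict torusK := by
  have h1 : (Neg.neg : ℝ → ℝ) ⁻¹' (Ico (-(1:ℝ)/2) (1/2)) = torusK := by
    ext x
    simp only [mem_preimage, mem_Ico, torusK, mem_Ioc]
    constructor <;> intro h <;> constructor <;> linarith [h.1, h.2]
  have h2 : ((volume : Measure ℝ).map Neg.neg).restrict (Ico (-(1:ℝ)/2) (1/2))
      = Measure.map Neg.neg (volume.restrict torusK) := by
    rw [Measure.restrict_map measurable_neg measurableSet_Ico, h1]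
  rw [Measure.map_neg_eq_self] at h2
  rw [← h2]
  exact Measure.restrict_congr_set (Ico_ae_eq_Icc.trans Ioc_ae_eq_Icc.symm)

lemma mp_negk : MeasurePreserving (fun q : ℝ × ℝ => (q.1, -q.2)) μYK μYK := by
  have : (fun q : ℝ × ℝ => (q.1, -q.2)) = Prod.map id (fun k => -k) := rfl
  rw [this, μYK]
  exact (MeasurePreserving.id _).prod ⟨measurable_neg, map_neg_torus⟩

lemma lintegral_negk (g : ℝ × ℝ → ℝ≥0∞) (hg : Measurable g) :
    ∫⁻ q, g (q.1, -q.2) ∂μYK = ∫⁻ q, g q ∂μYK :=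
  mp_negk.lintegral_comp hg

lemma lintegral_shift (g : ℝ × ℝ → ℝ≥0∞) (hg : Measurable g) (c : ℝ → ℝ) (hc : Measurable c) :
    ∫⁻ q, g (q.1 - c q.2, q.2) ∂μYK = ∫⁻ q, g q ∂μYK := by
  have hg' : Measurable fun q : ℝ × ℝ => g (q.1 - c q.2, q.2) :=
    hg.comp ((measurable_fst.sub (hc.comp measurable_snd)).prodMk measurable_snd)
  rw [μYK, lintegral_prod_symm _ hg.aemeasurable, lintegral_prod_symm _ hg'.aemeasurable]
  refine lintegral_congr fun k => ?_
  have := lintegral_add_right_eq_self (μ := (volume : Measure ℝ)) (fun x => g (x, k)) (-(c k))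
  simpa [sub_eq_add_neg] using this

lemma lintegral_refl (g : ℝ × ℝ → ℝ≥0∞) (hg : Measurable g) (c : ℝ → ℝ) (hc : Measurable c) :
    ∫⁻ q, g (c q.2 - q.1, q.2) ∂μYK = ∫⁻ q, g q ∂μYK := by
  have hg' : Measurable fun q : ℝ × ℝ => g (c q.2 - q.1, q.2) :=
    hg.comp (((hc.comp measurable_snd).sub measurable_fst).prodMk measurable_snd)
  rw [μYK, lintegral_prod_symm _ hg.aemeasurable, lintegral_prod_symm _ hg'.aemeasurable]
  refine lintegral_congr fun k => ?_
  exact (Measure.measurePreserving_sub_left volume (c k)).lintegral_comp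
    (hg.comp measurable_prodMk_right)

lemma graph_null (f : ℝ → ℝ) (hf : Measurable f) : μYK {q : ℝ × ℝ | q.1 = f q.2} = 0 := by
  have hmeas : MeasurableSet {q : ℝ × ℝ | q.1 = f q.2} :=
    measurableSet_eq_fun measurable_fst (hf.comp measurable_snd)
  rw [μYK, ← lintegral_indicator_one hmeas,
    lintegral_prod_symm _ ((measurable_one.indicator hmeas).aemeasurable)]
  have : ∀ k : ℝ, (∫⁻ y, ({q : ℝ × ℝ | q.1 = f q.2}).indicator (1 : ℝ × ℝ → ℝ≥0∞) (y, k)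
      ∂(volume : Measure ℝ)) = 0 := by
    intro k
    have : (fun y : ℝ => ({q : ℝ × ℝ | q.1 = f q.2}).indicator (1 : ℝ × ℝ → ℝ≥0∞) (y, k))
        = ({f k} : Set ℝ).indicator (1 : ℝ → ℝ≥0∞) := by
      funext y
      by_cases h : y = f k <;> simp [Set.indicator_apply, h]
    rw [this, lintegral_indicator_one (measurableSet_singleton _)]
    simp
  simp [this]

/-! ### Interval lemmas -/

lemma mem_uIcc_reflect {a y : ℝ} : a - y ∈ uIcc 0 a ↔ y ∈ uIcc 0 a := by
  simp only [Set.mem_uIcc]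
  constructor <;> rintro (⟨h1, h2⟩ | ⟨h1, h2⟩)
  · exact Or.inl ⟨by linarith, by linarith⟩
  · exact Or.inr ⟨by linarith, by linarith⟩
  · exact Or.inl ⟨by linarith, by linarith⟩
  · exact Or.inr ⟨by linarith, by linarith⟩

lemma mem_uIcc_neg {b x : ℝ} : x ∈ uIcc 0 (-b) ↔ -x ∈ uIcc 0 b := by
  simp only [Set.mem_uIcc]
  constructor <;> rintro (⟨h1, h2⟩ | ⟨h1, h2⟩)
  · exact Or.inr ⟨by linarith, by linarith⟩
  · exact Or.inl ⟨by linarith, by linarith⟩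
  · exact Or.inr ⟨by linarith, by linarith⟩
  · exact Or.inl ⟨by linarith, by linarith⟩

lemma mem_uIcc_shift {a y : ℝ} : y - a ∈ uIcc 0 (-a) ↔ y ∈ uIcc 0 a := by
  rw [mem_uIcc_neg]
  simp only [Set.mem_uIcc, neg_sub]
  constructor <;> rintro (⟨h1, h2⟩ | ⟨h1, h2⟩)
  · exact Or.inl ⟨by linarith, by linarith⟩
  · exact Or.inr ⟨by linarith, by linarith⟩
  · exact Or.inl ⟨by linarith, by linarith⟩
  · exact Or.inr ⟨by linarith, by linarith⟩

lemma uIcc_L1 {a b y : ℝ} (hsgn : 0 ≤ a ∧ 0 ≤ b ∨ a ≤ 0 ∧ b ≤ 0)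
    (hy0 : y ≠ 0) (hya : y ≠ a) (hy : y ∈ uIcc 0 a) : y - a ∉ uIcc 0 b := by
  simp only [Set.mem_uIcc] at hy ⊢
  push_neg
  rcases hsgn with ⟨ha, hb⟩ | ⟨ha, hb⟩ <;>
    rcases hy with ⟨h1, h2⟩ | ⟨h1, h2⟩ <;>
    rcases hy0.lt_or_gt with h0 | h0 <;>
    rcases hya.lt_or_gt with h3 | h3 <;>
    constructor <;> intro h <;> linarith

lemma uIcc_L2 {a b y : ℝ} (hsgn : 0 ≤ a ∧ 0 ≤ b ∨ a ≤ 0 ∧ b ≤ 0)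
    (hy : y ∈ uIcc 0 a ∨ y - a ∈ uIcc 0 b) : y ∈ uIcc 0 (a + b) := by
  simp only [Set.mem_uIcc] at hy ⊢
  rcases hsgn with ⟨ha, hb⟩ | ⟨ha, hb⟩ <;>
    rcases hy with (⟨h1, h2⟩ | ⟨h1, h2⟩) | (⟨h1, h2⟩ | ⟨h1, h2⟩) <;>
    first
      | exact Or.inl ⟨by linarith, by linarith⟩
      | exact Or.inr ⟨by linarith, by linarith⟩

lemma uIcc_L3 {a b y : ℝ} (hsgn : 0 ≤ a ∧ 0 ≤ b ∨ a ≤ 0 ∧ b ≤ 0)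
    (hy : y ∈ uIcc 0 (a + b)) (hya : y ∉ uIcc 0 a) : y - a ∈ uIcc 0 b := by
  simp only [Set.mem_uIcc] at hy hya ⊢
  push_neg at hya
  rcases hsgn with ⟨ha, hb⟩ | ⟨ha, hb⟩
  · rcases hy with ⟨h1, h2⟩ | ⟨h1, h2⟩
    · have h3 : a < y := hya.1 h1
      exact Or.inl ⟨by linarith, by linarith⟩
    · have h3 : a < y := hya.1 (by linarith)
      exact Or.inl ⟨by linarith, by linarith⟩
  · rcases hy with ⟨h1, h2⟩ | ⟨h1, h2⟩
    · exact Or.inr ⟨by linarith, by linarith⟩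
    · have h4 : y ≤ a := by
        by_contra h
        exact absurd (hya.2 (le_of_lt (not_le.mp h))) (by linarith)
      exact Or.inr ⟨by linarith, by linarith⟩

/-! ### Measurability and pointwise bounds -/

lemma cond_measSet (f : ℝ → ℝ) (hf : Measurable f) :
    MeasurableSet {q : ℝ × ℝ | q.1 ∈ uIcc (0:ℝ) (f q.2)} := by
  have : {q : ℝ × ℝ | q.1 ∈ uIcc (0:ℝ) (f q.2)}
      = {q : ℝ × ℝ | min 0 (f q.2) ≤ q.1} ∩ {q : ℝ × ℝ | q.1 ≤ max 0 (f q.2)} := by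
    ext q
    simp [Set.uIcc, Set.mem_Icc]
  rw [this]
  exact (measurableSet_le (measurable_const.min (hf.comp measurable_snd)) measurable_fst).inter
    (measurableSet_le measurable_fst (measurable_const.max (hf.comp measurable_snd)))

lemma WunF_meas (γ₀ : ℝ) (ωb R pp pm : ℝ → ℝ) (hωb : Measurable ωb) (hR : Measurable R)
    (hpp : Measurable pp) (hpm : Measurable pm) (W₀ : ℝ → ℝ → ℝ)
    (hW : Measurable (Function.uncurry W₀)) (t : ℝ) :
    Measurable (fun q : ℝ × ℝ => WunF γ₀ ωb R pp pm W₀ t q.1 q.2) := by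
  unfold WunF
  have hA : Measurable (fun q : ℝ × ℝ => W₀ (q.1 - ωb q.2 * t) q.2) :=
    hW.comp ((measurable_fst.sub ((hωb.comp measurable_snd).mul_const t)).prodMk
      measurable_snd)
  have hB : Measurable (fun q : ℝ × ℝ => W₀ (-q.1 + ωb q.2 * t) (-q.2)) :=
    hW.comp ((measurable_fst.neg.add ((hωb.comp measurable_snd).mul_const t)).prodMk
      measurable_snd.neg)
  refine Measurable.mul ?_ ?_
  · exact Real.measurable_exp.comp (((hR.comp measurable_snd).const_mul _).mul_const t).neg
  · exact Measurable.ite (cond_measSet (fun k => ωb k * t) (hωb.mul_const t))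
      ((((hpp.comp measurable_snd)).mul hA).add (((hpm.comp measurable_snd)).mul hB)) hA

lemma convex_bound (w₁ w₂ a b : ℝ≥0∞) (hw : w₁ + w₂ ≤ 1) {r : ℝ} (hr : 1 ≤ r) :
    (w₁ * a + w₂ * b) ^ r ≤ w₁ * a ^ r + w₂ * b ^ r := by
  have h3 : w₁ + w₂ + (1 - (w₁ + w₂)) = 1 := add_tsub_cancel_of_le hw
  have key := ENNReal.rpow_arith_mean_le_arith_mean_rpow (Finset.range 3)
      (fun i => if i = 0 then w₁ else if i = 1 then w₂ else 1 - (w₁ + w₂))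
      (fun i => if i = 0 then a else if i = 1 then b else 0)
      (by simp [Finset.sum_range_succ, ← add_assoc, h3]) hr
  have hz : (0 : ℝ≥0∞) ^ r = 0 := ENNReal.zero_rpow_of_pos (lt_of_lt_of_le zero_lt_one hr)
  simpa [Finset.sum_range_succ, hz, mul_zero] using key

lemma WunF_nn_bound (γ₀ : ℝ) (ωb R pp pm : ℝ → ℝ) (W₀ : ℝ → ℝ → ℝ) (t y k : ℝ)
    (hγ₀ : 0 ≤ γ₀) (ht : 0 ≤ t) (hRnn : 0 ≤ R k) (hpp : 0 ≤ pp k) (hpm : 0 ≤ pm k) :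
    (‖WunF γ₀ ωb R pp pm W₀ t y k‖₊ : ℝ≥0∞)
      ≤ if y ∈ uIcc (0:ℝ) (ωb k * t) then
          ENNReal.ofReal (pp k) * (‖W₀ (y - ωb k * t) k‖₊ : ℝ≥0∞)
            + ENNReal.ofReal (pm k) * (‖W₀ (-y + ωb k * t) (-k)‖₊ : ℝ≥0∞)
        else (‖W₀ (y - ωb k * t) k‖₊ : ℝ≥0∞) := by
  unfold WunF
  have hexp : (‖Real.exp (-(2 * γ₀ * R k * t))‖₊ : ℝ≥0∞) ≤ 1 := by
    rw [← enorm_eq_nnnorm, Real.enorm_eq_ofReal (Real.exp_nonneg _)]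
    refine ENNReal.ofReal_le_one.2 (Real.exp_le_one_iff.2 ?_)
    have : 0 ≤ 2 * γ₀ * R k * t := by positivity
    linarith
  rw [nnnorm_mul, ENNReal.coe_mul]
  refine le_trans (mul_le_mul_left hexp _) ?_
  rw [one_mul]
  by_cases hy : y ∈ uIcc (0:ℝ) (ωb k * t)
  · simp only [if_pos hy]
    refine le_trans (ENNReal.coe_le_coe.2 (nnnorm_add_le _ _)) ?_
    rw [nnnorm_mul, nnnorm_mul, ENNReal.coe_add, ENNReal.coe_mul, ENNReal.coe_mul,
      ← enorm_eq_nnnorm (pp k), Real.enorm_eq_ofReal hpp, ← enorm_eq_nnnorm (pm k),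
      Real.enorm_eq_ofReal hpm]
  · simp only [if_neg hy, le_refl]

lemma lint_contract (γ₀ : ℝ) (hγ₀ : 0 ≤ γ₀)
    (ωb : ℝ → ℝ) (hωbm : Measurable ωb) (hωbodd : ∀ k, ωb (-k) = -ωb k)
    (R : ℝ → ℝ) (hRm : Measurable R) (hRnn : ∀ k, 0 ≤ R k)
    (pp pm : ℝ → ℝ) (hppm : Measurable pp) (hpmm : Measurable pm)
    (hpmev : ∀ k, pm (-k) = pm k)
    (hppnn : ∀ k, 0 ≤ pp k) (hpmnn : ∀ k, 0 ≤ pm k) (hple : ∀ k, pp k + pm k ≤ 1)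
    (W₀ : ℝ → ℝ → ℝ) (hW : Measurable (Function.uncurry W₀)) (t : ℝ) (ht : 0 ≤ t)
    {r : ℝ} (hr : 1 ≤ r) :
    ∫⁻ q, (‖WunF γ₀ ωb R pp pm W₀ t q.1 q.2‖₊ : ℝ≥0∞) ^ r ∂μYK
      ≤ ∫⁻ q, (‖Function.uncurry W₀ q‖₊ : ℝ≥0∞) ^ r ∂μYK := by
  have hc : Measurable (fun k : ℝ => ωb k * t) := hωbm.mul_const t
  set c : ℝ → ℝ := fun k => ωb k * t with hc_def
  set Φ : ℝ × ℝ → ℝ≥0∞ := fun q => (‖Function.uncurry W₀ q‖₊ : ℝ≥0∞) ^ r with hΦ_def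
  have hΦm : Measurable Φ := hW.nnnorm.coe_nnreal_ennreal.pow_const r
  set w₁ : ℝ → ℝ≥0∞ := fun k => ENNReal.ofReal (pp k) with hw₁_def
  set w₂ : ℝ → ℝ≥0∞ := fun k => ENNReal.ofReal (pm k) with hw₂_def
  have hw₁m : Measurable w₁ := ENNReal.measurable_ofReal.comp hppm
  have hw₂m : Measurable w₂ := ENNReal.measurable_ofReal.comp hpmm
  have hsum : ∀ k, w₁ k + w₂ k ≤ 1 := by
    intro k
    rw [hw₁_def, hw₂_def, ← ENNReal.ofReal_add (hppnn k) (hpmnn k)]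
    exact ENNReal.ofReal_le_one.2 (hple k)
  -- pointwise bound
  have hpt : ∀ q : ℝ × ℝ,
      (‖WunF γ₀ ωb R pp pm W₀ t q.1 q.2‖₊ : ℝ≥0∞) ^ r
        ≤ (if q.1 ∈ uIcc (0:ℝ) (c q.2) then w₁ q.2 else 1) * Φ (q.1 - c q.2, q.2)
          + (if q.1 ∈ uIcc (0:ℝ) (c q.2) then w₂ q.2 else 0) * Φ (c q.2 - q.1, -q.2) := by
    rintro ⟨y, k⟩
    have hb := WunF_nn_bound γ₀ ωb R pp pm W₀ t y k hγ₀ ht (hRnn k) (hppnn k) (hpmnn k)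
    refine le_trans (ENNReal.rpow_le_rpow hb (by linarith)) ?_
    by_cases hy : y ∈ uIcc (0:ℝ) (c k)
    · simp only [if_pos hy, if_pos (show y ∈ uIcc (0:ℝ) (ωb k * t) from hy)]
      have harg : -y + c k = c k - y := by ring
      rw [harg]
      exact convex_bound (w₁ k) (w₂ k) _ _ (hsum k) hr
    · simp only [if_neg hy, if_neg (show y ∉ uIcc (0:ℝ) (ωb k * t) from hy), one_mul, zero_mul,
        add_zero]
      exact le_of_eq rfl
  -- measurable pieces
  have hc₁m : Measurable (fun q : ℝ × ℝ => if q.1 ∈ uIcc (0:ℝ) (c q.2) then w₁ q.2 else 1) :=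
    Measurable.ite (cond_measSet c hc) (hw₁m.comp measurable_snd) measurable_const
  have hc₂m : Measurable (fun q : ℝ × ℝ => if q.1 ∈ uIcc (0:ℝ) (c q.2) then w₂ q.2 else 0) :=
    Measurable.ite (cond_measSet c hc) (hw₂m.comp measurable_snd) measurable_const
  have hm1 : Measurable (fun q : ℝ × ℝ =>
      (if q.1 ∈ uIcc (0:ℝ) (c q.2) then w₁ q.2 else 1) * Φ (q.1 - c q.2, q.2)) :=
    hc₁m.mul (hΦm.comp ((measurable_fst.sub (hc.comp measurable_snd)).prodMk measurable_snd))
  -- transform first term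
  have hT1 : ∫⁻ q, (if q.1 ∈ uIcc (0:ℝ) (c q.2) then w₁ q.2 else 1) * Φ (q.1 - c q.2, q.2) ∂μYK
      = ∫⁻ q, (if q.1 ∈ uIcc (0:ℝ) (-c q.2) then w₁ q.2 else 1) * Φ q ∂μYK := by
    have hg₁m : Measurable (fun q : ℝ × ℝ =>
        (if q.1 ∈ uIcc (0:ℝ) (-c q.2) then w₁ q.2 else 1) * Φ q) :=
      (Measurable.ite (cond_measSet (fun k => -c k) hc.neg) (hw₁m.comp measurable_snd)
        measurable_const).mul hΦm
    have heq : ∀ q : ℝ × ℝ,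
        (if q.1 ∈ uIcc (0:ℝ) (c q.2) then w₁ q.2 else 1) * Φ (q.1 - c q.2, q.2)
          = (if (q.1 - c q.2) ∈ uIcc (0:ℝ) (-c q.2) then w₁ q.2 else 1) * Φ (q.1 - c q.2, q.2) := by
      rintro ⟨y, k⟩
      congr 1
      by_cases hy : y ∈ uIcc (0:ℝ) (c k)
      · rw [if_pos hy, if_pos (mem_uIcc_shift.2 hy)]
      · rw [if_neg hy, if_neg (fun h => hy (mem_uIcc_shift.1 h))]
    rw [lintegral_congr heq]
    exact lintegral_shift _ hg₁m c hc
  -- transform second term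
  have hT2 : ∫⁻ q, (if q.1 ∈ uIcc (0:ℝ) (c q.2) then w₂ q.2 else 0) * Φ (c q.2 - q.1, -q.2) ∂μYK
      = ∫⁻ q, (if q.1 ∈ uIcc (0:ℝ) (-c q.2) then w₂ q.2 else 0) * Φ q ∂μYK := by
    have hg₂m : Measurable (fun q : ℝ × ℝ =>
        (if q.1 ∈ uIcc (0:ℝ) (c q.2) then w₂ q.2 else 0) * Φ (q.1, -q.2)) :=
      hc₂m.mul (hΦm.comp (measurable_fst.prodMk measurable_snd.neg))
    have heq : ∀ q : ℝ × ℝ,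
        (if q.1 ∈ uIcc (0:ℝ) (c q.2) then w₂ q.2 else 0) * Φ (c q.2 - q.1, -q.2)
          = (if (c q.2 - q.1) ∈ uIcc (0:ℝ) (c q.2) then w₂ q.2 else 0) * Φ (c q.2 - q.1, -q.2) := by
      rintro ⟨y, k⟩
      congr 1
      by_cases hy : y ∈ uIcc (0:ℝ) (c k)
      · rw [if_pos hy, if_pos (mem_uIcc_reflect.2 hy)]
      · rw [if_neg hy, if_neg (fun h => hy (mem_uIcc_reflect.1 h))]
    rw [lintegral_congr heq]
    have step1 : ∫⁻ q, (if (c q.2 - q.1) ∈ uIcc (0:ℝ) (c q.2) then w₂ q.2 else 0)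
          * Φ (c q.2 - q.1, -q.2) ∂μYK
        = ∫⁻ q, (if q.1 ∈ uIcc (0:ℝ) (c q.2) then w₂ q.2 else 0) * Φ (q.1, -q.2) ∂μYK :=
      lintegral_refl (fun q => (if q.1 ∈ uIcc (0:ℝ) (c q.2) then w₂ q.2 else 0) * Φ (q.1, -q.2))
        hg₂m c hc
    rw [step1]
    have hg₃m : Measurable (fun q : ℝ × ℝ =>
        (if q.1 ∈ uIcc (0:ℝ) (-c q.2) then w₂ q.2 else 0) * Φ q) :=
      (Measurable.ite (cond_measSet (fun k => -c k) hc.neg) (hw₂m.comp measurable_snd)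
        measurable_const).mul hΦm
    have heq2 : ∀ q : ℝ × ℝ,
        (if q.1 ∈ uIcc (0:ℝ) (c q.2) then w₂ q.2 else 0) * Φ (q.1, -q.2)
          = (if q.1 ∈ uIcc (0:ℝ) (-c (-q.2)) then w₂ (-q.2) else 0) * Φ (q.1, -q.2) := by
      rintro ⟨y, k⟩
      have h1 : -c (-k) = c k := by
        simp only [hc_def, hωbodd k]
        ring
      have h2 : w₂ (-k) = w₂ k := by simp only [hw₂_def, hpmev k]
      rw [h1, h2]
    rw [lintegral_congr heq2]
    exact lintegral_negk _ hg₃m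
  calc ∫⁻ q, (‖WunF γ₀ ωb R pp pm W₀ t q.1 q.2‖₊ : ℝ≥0∞) ^ r ∂μYK
      ≤ ∫⁻ q, ((if q.1 ∈ uIcc (0:ℝ) (c q.2) then w₁ q.2 else 1) * Φ (q.1 - c q.2, q.2)
          + (if q.1 ∈ uIcc (0:ℝ) (c q.2) then w₂ q.2 else 0) * Φ (c q.2 - q.1, -q.2)) ∂μYK :=
        lintegral_mono hpt
    _ = (∫⁻ q, (if q.1 ∈ uIcc (0:ℝ) (c q.2) then w₁ q.2 else 1) * Φ (q.1 - c q.2, q.2) ∂μYK)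
          + ∫⁻ q, (if q.1 ∈ uIcc (0:ℝ) (c q.2) then w₂ q.2 else 0) * Φ (c q.2 - q.1, -q.2) ∂μYK :=
        lintegral_add_left hm1 _
    _ = (∫⁻ q, (if q.1 ∈ uIcc (0:ℝ) (-c q.2) then w₁ q.2 else 1) * Φ q ∂μYK)
          + ∫⁻ q, (if q.1 ∈ uIcc (0:ℝ) (-c q.2) then w₂ q.2 else 0) * Φ q ∂μYK := by
        rw [hT1, hT2]
    _ = ∫⁻ q, ((if q.1 ∈ uIcc (0:ℝ) (-c q.2) then w₁ q.2 else 1) * Φ q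
          + (if q.1 ∈ uIcc (0:ℝ) (-c q.2) then w₂ q.2 else 0) * Φ q) ∂μYK := by
        rw [← lintegral_add_left]
        exact (Measurable.ite (cond_measSet (fun k => -c k) hc.neg)
          (hw₁m.comp measurable_snd) measurable_const).mul hΦm
    _ ≤ ∫⁻ q, Φ q ∂μYK := by
        refine lintegral_mono fun q => ?_
        by_cases hq : q.1 ∈ uIcc (0:ℝ) (-c q.2)
        · rw [if_pos hq, if_pos hq, ← add_mul]
          calc (w₁ q.2 + w₂ q.2) * Φ q ≤ 1 * Φ q := mul_le_mul_left (hsum q.2) _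
            _ = Φ q := one_mul _
        · rw [if_neg hq, if_neg hq, one_mul, zero_mul, add_zero]

lemma semigroup_ptwise (γ₀ : ℝ) (ωb R pp pm : ℝ → ℝ) (W₀ : ℝ → ℝ → ℝ)
    (hωbodd : ∀ k, ωb (-k) = -ωb k) (hRev : ∀ k, R (-k) = R k)
    (hppev : ∀ k, pp (-k) = pp k) (hpmev : ∀ k, pm (-k) = pm k)
    (s t : ℝ) (hs : 0 ≤ s) (ht : 0 ≤ t) (y k : ℝ)
    (hy0 : y ≠ 0) (hya : y ≠ ωb k * t) (hyab : y ≠ ωb k * (t + s)) :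
    WunF γ₀ ωb R pp pm W₀ (t + s) y k
      = WunF γ₀ ωb R pp pm (fun y' k' => WunF γ₀ ωb R pp pm W₀ s y' k') t y k := by
  have hsgn : 0 ≤ ωb k * t ∧ 0 ≤ ωb k * s ∨ ωb k * t ≤ 0 ∧ ωb k * s ≤ 0 := by
    rcases le_total 0 (ωb k) with h | h
    · exact Or.inl ⟨mul_nonneg h ht, mul_nonneg h hs⟩
    · exact Or.inr ⟨mul_nonpos_of_nonpos_of_nonneg h ht,
        mul_nonpos_of_nonpos_of_nonneg h hs⟩
  have hab : ωb k * (t + s) = ωb k * t + ωb k * s := by ring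
  have hyab' : y ≠ ωb k * t + ωb k * s := hab ▸ hyab
  have hexp : Real.exp (-(2 * γ₀ * R k * (t + s)))
      = Real.exp (-(2 * γ₀ * R k * t)) * Real.exp (-(2 * γ₀ * R k * s)) := by
    rw [← Real.exp_add]
    congr 1
    ring
  simp only [WunF, hab, hexp, hωbodd k, hRev k, hppev k, hpmev k, neg_neg]
  by_cases hC1 : y ∈ uIcc (0:ℝ) (ωb k * t)
  · have hC2 : y - ωb k * t ∉ uIcc (0:ℝ) (ωb k * s) := uIcc_L1 hsgn hy0 hya hC1
    have hC0 : y ∈ uIcc (0:ℝ) (ωb k * t + ωb k * s) := uIcc_L2 hsgn (Or.inl hC1)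
    have hC3 : -y + ωb k * t ∉ uIcc (0:ℝ) (-ωb k * s) := by
      intro h
      apply hC2
      rw [show (-ωb k * s : ℝ) = -(ωb k * s) from by ring] at h
      have h' := mem_uIcc_neg.1 h
      rw [show -(-y + ωb k * t) = y - ωb k * t from by ring] at h'
      exact h'
    rw [if_pos hC0, if_pos hC1, if_neg hC2, if_neg hC3]
    rw [show y - (ωb k * t + ωb k * s) = y - ωb k * t - ωb k * s from by ring,
      show -y + (ωb k * t + ωb k * s) = -y + ωb k * t - -ωb k * s from by ring]
    ring
  · by_cases hC2 : y - ωb k * t ∈ uIcc (0:ℝ) (ωb k * s)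
    · have hC0 : y ∈ uIcc (0:ℝ) (ωb k * t + ωb k * s) := uIcc_L2 hsgn (Or.inr hC2)
      rw [if_pos hC0, if_neg hC1, if_pos hC2]
      rw [show y - (ωb k * t + ωb k * s) = y - ωb k * t - ωb k * s from by ring,
        show -y + (ωb k * t + ωb k * s) = -(y - ωb k * t) + ωb k * s from by ring]
      ring
    · have hC0 : y ∉ uIcc (0:ℝ) (ωb k * t + ωb k * s) := fun h => hC2 (uIcc_L3 hsgn h hC1)
      rw [if_neg hC0, if_neg hC1, if_neg hC2]
      rw [show y - (ωb k * t + ωb k * s) = y - ωb k * t - ωb k * s from by ring]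
      ring

/-- `𝔚^un_t` is linear, a contraction on every `L^p(ℝ×𝕋)`
(`1 ≤ p ≤ ∞`), and the family `(𝔚^un_t)_{t≥0}` is a semigroup (almost everywhere). -/
theorem Wun_lp_contraction_semigroup
    (γ₀ : ℝ) (hγ₀ : 0 < γ₀)
    (ωb : ℝ → ℝ) (hωbm : Measurable ωb) (hωbodd : ∀ k, ωb (-k) = -ωb k)
    (hωbb : ∃ C : ℝ, ∀ k, |ωb k| ≤ C)
    (R : ℝ → ℝ) (hRm : Measurable R) (hRev : ∀ k, R (-k) = R k) (hRnn : ∀ k, 0 ≤ R k)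
    (hRb : ∃ C : ℝ, ∀ k, R k ≤ C)
    (pp pm : ℝ → ℝ) (hppm : Measurable pp) (hpmm : Measurable pm)
    (hppev : ∀ k, pp (-k) = pp k) (hpmev : ∀ k, pm (-k) = pm k)
    (hppnn : ∀ k, 0 ≤ pp k) (hpmnn : ∀ k, 0 ≤ pm k) (hple : ∀ k, pp k + pm k ≤ 1)
    (p : ℝ≥0∞) (hp : 1 ≤ p) :
    -- linearity
    (∀ (W₁ W₂ : ℝ → ℝ → ℝ) (a b t y k : ℝ),
        WunF γ₀ ωb R pp pm (fun y' k' => a * W₁ y' k' + b * W₂ y' k') t y k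
          = a * WunF γ₀ ωb R pp pm W₁ t y k + b * WunF γ₀ ωb R pp pm W₂ t y k) ∧
    -- L^p contraction
    (∀ (W₀ : ℝ → ℝ → ℝ), Measurable (Function.uncurry W₀) → ∀ t : ℝ, 0 ≤ t →
        eLpNorm (fun q : ℝ × ℝ => WunF γ₀ ωb R pp pm W₀ t q.1 q.2) p μYK
          ≤ eLpNorm (Function.uncurry W₀) p μYK) ∧
    -- semigroup property (a.e.)
    (∀ (W₀ : ℝ → ℝ → ℝ), Measurable (Function.uncurry W₀) → ∀ s t : ℝ, 0 ≤ s → 0 ≤ t →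
        ∀ᵐ q ∂μYK, WunF γ₀ ωb R pp pm W₀ (t + s) q.1 q.2
          = WunF γ₀ ωb R pp pm (fun y k => WunF γ₀ ωb R pp pm W₀ s y k) t q.1 q.2) := by
  refine ⟨?_, ?_, ?_⟩
  · -- linearity
    intro W₁ W₂ a b t y k
    simp only [WunF]
    by_cases h : y ∈ uIcc (0:ℝ) (ωb k * t)
    · simp only [if_pos h]; ring
    · simp only [if_neg h]; ring
  · -- contraction
    intro W₀ hW t ht
    by_cases hptop : p = ⊤
    · subst hptop
      rw [eLpNorm_exponent_top, eLpNorm_exponent_top]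
      have hc : Measurable (fun k : ℝ => ωb k * t) := hωbm.mul_const t
      set c : ℝ → ℝ := fun k => ωb k * t with hc_def
      set M := eLpNormEssSup (Function.uncurry W₀) μYK with hMdef
      have hM := enorm_ae_le_eLpNormEssSup (Function.uncurry W₀) μYK
      set N := {q : ℝ × ℝ | ¬((‖Function.uncurry W₀ q‖₊ : ℝ≥0∞) ≤ M)} with hNdef
      have hNm : MeasurableSet N := (measurableSet_le hW.nnnorm.coe_nnreal_ennreal measurable_const).compl
      have hN0 : μYK N = 0 := ae_iff.1 hM
      set χ : ℝ × ℝ → ℝ≥0∞ := N.indicator (1 : ℝ × ℝ → ℝ≥0∞) with hχdef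
      have hχm : Measurable χ := measurable_one.indicator hNm
      have key1 : μYK {q : ℝ × ℝ | (q.1 - c q.2, q.2) ∈ N} = 0 := by
        have hpre : MeasurableSet {q : ℝ × ℝ | (q.1 - c q.2, q.2) ∈ N} :=
          ((measurable_fst.sub (hc.comp measurable_snd)).prodMk measurable_snd) hNm
        have h1 : ∫⁻ q, χ (q.1 - c q.2, q.2) ∂μYK = 0 := by
          rw [lintegral_shift χ hχm c hc, hχdef, lintegral_indicator_one hNm]
          exact hN0
        have h2 : ∫⁻ q, χ (q.1 - c q.2, q.2) ∂μYK
            = μYK {q : ℝ × ℝ | (q.1 - c q.2, q.2) ∈ N} := by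
          rw [show (fun q : ℝ × ℝ => χ (q.1 - c q.2, q.2))
              = ({q : ℝ × ℝ | (q.1 - c q.2, q.2) ∈ N}).indicator (1 : ℝ × ℝ → ℝ≥0∞) from
            funext fun q => by
              by_cases hq : (q.1 - c q.2, q.2) ∈ N <;>
                simp [hχdef, Set.indicator_apply, hq]]
          exact lintegral_indicator_one hpre
        rw [← h2]; exact h1
      have key2 : μYK {q : ℝ × ℝ | (c q.2 - q.1, -q.2) ∈ N} = 0 := by
        have hpre : MeasurableSet {q : ℝ × ℝ | (c q.2 - q.1, -q.2) ∈ N} :=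
          (((hc.comp measurable_snd).sub measurable_fst).prodMk measurable_snd.neg) hNm
        have hgm : Measurable (fun q : ℝ × ℝ => χ (q.1, -q.2)) :=
          hχm.comp (measurable_fst.prodMk measurable_snd.neg)
        have h1 : ∫⁻ q, χ (c q.2 - q.1, -q.2) ∂μYK = 0 := by
          have e1 : ∫⁻ q, χ (c q.2 - q.1, -q.2) ∂μYK = ∫⁻ q, χ (q.1, -q.2) ∂μYK :=
            lintegral_refl (fun q => χ (q.1, -q.2)) hgm c hc
          rw [e1, lintegral_negk χ hχm, hχdef, lintegral_indicator_one hNm]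
          exact hN0
        have h2 : ∫⁻ q, χ (c q.2 - q.1, -q.2) ∂μYK
            = μYK {q : ℝ × ℝ | (c q.2 - q.1, -q.2) ∈ N} := by
          rw [show (fun q : ℝ × ℝ => χ (c q.2 - q.1, -q.2))
              = ({q : ℝ × ℝ | (c q.2 - q.1, -q.2) ∈ N}).indicator (1 : ℝ × ℝ → ℝ≥0∞) from
            funext fun q => by
              by_cases hq : (c q.2 - q.1, -q.2) ∈ N <;>
                simp [hχdef, Set.indicator_apply, hq]]
          exact lintegral_indicator_one hpre
        rw [← h2]; exact h1
      have hae1 : ∀ᵐ q ∂μYK, (‖W₀ (q.1 - c q.2) q.2‖₊ : ℝ≥0∞) ≤ M := by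
        rw [ae_iff]
        convert key1 using 2
        rfl
      have hae2 : ∀ᵐ q ∂μYK, (‖W₀ (c q.2 - q.1) (-q.2)‖₊ : ℝ≥0∞) ≤ M := by
        rw [ae_iff]
        convert key2 using 2
        rfl
      refine essSup_le_of_ae_le M ?_
      filter_upwards [hae1, hae2] with q h1 h2
      refine le_trans (WunF_nn_bound γ₀ ωb R pp pm W₀ t q.1 q.2 hγ₀.le ht (hRnn _)
        (hppnn _) (hpmnn _)) ?_
      have hsum : ENNReal.ofReal (pp q.2) + ENNReal.ofReal (pm q.2) ≤ 1 := by
        rw [← ENNReal.ofReal_add (hppnn _) (hpmnn _)]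
        exact ENNReal.ofReal_le_one.2 (hple _)
      by_cases hq : q.1 ∈ uIcc (0:ℝ) (ωb q.2 * t)
      · rw [if_pos hq]
        have h2' : (‖W₀ (-q.1 + ωb q.2 * t) (-q.2)‖₊ : ℝ≥0∞) ≤ M := by
          rw [show -q.1 + ωb q.2 * t = ωb q.2 * t - q.1 from by ring]
          exact h2
        calc ENNReal.ofReal (pp q.2) * (‖W₀ (q.1 - ωb q.2 * t) q.2‖₊ : ℝ≥0∞)
              + ENNReal.ofReal (pm q.2) * (‖W₀ (-q.1 + ωb q.2 * t) (-q.2)‖₊ : ℝ≥0∞)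
            ≤ ENNReal.ofReal (pp q.2) * M + ENNReal.ofReal (pm q.2) * M :=
              add_le_add (mul_le_mul_right h1 _) (mul_le_mul_right h2' _)
          _ = (ENNReal.ofReal (pp q.2) + ENNReal.ofReal (pm q.2)) * M := (add_mul _ _ _).symm
          _ ≤ 1 * M := mul_le_mul_left hsum _
          _ = M := one_mul M
      · rw [if_neg hq]
        exact h1
    · have hp0 : p ≠ 0 := (lt_of_lt_of_le zero_lt_one hp).ne'
      rw [eLpNorm_eq_lintegral_rpow_enorm_toReal hp0 hptop,
        eLpNorm_eq_lintegral_rpow_enorm_toReal hp0 hptop]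
      have hr : 1 ≤ p.toReal := by
        have := ENNReal.toReal_mono hptop hp
        simpa using this
      exact ENNReal.rpow_le_rpow
        (lint_contract γ₀ hγ₀.le ωb hωbm hωbodd R hRm hRnn pp pm hppm hpmm hpmev
          hppnn hpmnn hple W₀ hW t ht hr)
        (one_div_nonneg.2 ENNReal.toReal_nonneg)
  · -- semigroup
    intro W₀ hW s t hs ht
    have hS : μYK {q : ℝ × ℝ | q.1 = 0 ∨ q.1 = ωb q.2 * t ∨ q.1 = ωb q.2 * (t + s)} = 0 := by
      refine measure_mono_null (fun q hq => ?_)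
        (measure_union_null (graph_null (fun _ => (0:ℝ)) measurable_const)
          (measure_union_null (graph_null (fun k => ωb k * t) (hωbm.mul_const t))
            (graph_null (fun k => ωb k * (t + s)) (hωbm.mul_const (t + s)))))
      exact hq
    rw [ae_iff]
    refine measure_mono_null (fun q hq => ?_) hS
    simp only [mem_setOf_eq] at hq ⊢
    by_contra hns
    push_neg at hns
    exact hq (semigroup_ptwise γ₀ ωb R pp pm W₀ hωbodd hRev hppev hpmev s t hs ht q.1 q.2
      hns.1 hns.2.1 hns.2.2)
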